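/- Every [3,3,3]-partite simple graph is isomorphic to one of the following three graphs: the disjoint union of three triangles K₃ ∪ K₃ ∪ K₃, the cycle C₉ on nine vertices, or the disjoint union K₃ ∪ C₆ of a triangle and a six-cycle. -/

import Mathlib

/-- `G` admits two orthogonal proper colourings, each using at most `k` colours:
two proper colourings such that no two distinct vertices receive the same pair of colours. -/
def HasOrthColoring {V : Type*} (G : SimpleGraph V) (k : ℕ) : Prop :=
  ∃ c₁ c₂ : V → Fin k,
    (∀ ⦃u v⦄, G.Adj u v → c₁ u ≠ c₁ v) ∧
    (∀ ⦃u v⦄, G.Adj u v → c₂ u ≠ c₂ v) ∧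
    Function.Injective fun v => (c₁ v, c₂ v)

/-- `G` is `[n,k,r]`-partite with respect to the partition `A` of its vertex set:
the classes `A i` partition the vertices, each class has size `k` and is an independent set,
and between every pair of distinct classes there are exactly `r` edges, which are
pairwise non-adjacent (they form a matching). -/
def IsPartiteNKR {V : Type*} (G : SimpleGraph V) (n k r : ℕ) (A : Fin n → Finset V) : Prop :=
  (∀ v : V, ∃! i, v ∈ A i) ∧
  (∀ i, (A i).card = k) ∧
  (∀ i, ∀ u ∈ A i, ∀ v ∈ A i, ¬ G.Adj u v) ∧
  ∀ i j, i ≠ j →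
    {p : V × V | p.1 ∈ A i ∧ p.2 ∈ A j ∧ G.Adj p.1 p.2}.ncard = r ∧
    ∀ p q : V × V,
      p.1 ∈ A i → p.2 ∈ A j → G.Adj p.1 p.2 →
      q.1 ∈ A i → q.2 ∈ A j → G.Adj q.1 q.2 →
      p ≠ q → p.1 ≠ q.1 ∧ p.2 ≠ q.2

/-- `T` is an independent transversal of `G` with respect to the partition `A`:
an independent set containing exactly one vertex from each class. -/
def IsIndepTransversal {V : Type*} {n : ℕ} (G : SimpleGraph V) (A : Fin n → Finset V)
    (T : Finset V) : Prop :=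
  (∀ u ∈ T, ∀ v ∈ T, ¬ G.Adj u v) ∧ ∀ i, ∃! v, v ∈ T ∧ v ∈ A i

/-- `G` has an independent covering with respect to the partition `A`:
a collection of pairwise disjoint independent transversals spanning all vertices. -/
def HasIndepCovering {V : Type*} {n : ℕ} (G : SimpleGraph V) (A : Fin n → Finset V) : Prop :=
  ∃ (m : ℕ) (T : Fin m → Finset V),
    (∀ j, IsIndepTransversal G A (T j)) ∧
    (Pairwise fun j j' => Disjoint (T j) (T j')) ∧
    ∀ v : V, ∃ j, v ∈ T j

/-- The disjoint union of three triangles, `K₃ ∪ K₃ ∪ K₃`. -/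
def tripleTriangle : SimpleGraph (Fin 3 ⊕ (Fin 3 ⊕ Fin 3)) :=
  (⊤ : SimpleGraph (Fin 3)) ⊕g ((⊤ : SimpleGraph (Fin 3)) ⊕g (⊤ : SimpleGraph (Fin 3)))

/-- The disjoint union `K₃ ∪ C₆` of a triangle and a six-cycle. -/
def triangleUnionHexagon : SimpleGraph (Fin 3 ⊕ Fin 6) :=
  (⊤ : SimpleGraph (Fin 3)) ⊕g SimpleGraph.cycleGraph 6

instance sumAdjDec {α β : Type*} (G : SimpleGraph α) (H : SimpleGraph β)
    [DecidableRel G.Adj] [DecidableRel H.Adj] : DecidableRel (G ⊕g H).Adj := fun u v =>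
  match u, v with
  | Sum.inl u, Sum.inl v => inferInstanceAs (Decidable (G.Adj u v))
  | Sum.inr u, Sum.inr v => inferInstanceAs (Decidable (H.Adj u v))
  | Sum.inl _, Sum.inr _ => inferInstanceAs (Decidable (false = true))
  | Sum.inr _, Sum.inl _ => inferInstanceAs (Decidable (false = true))

def ModelAdj (π : Equiv.Perm (Fin 3)) (p q : Fin 3 × Fin 3) : Prop :=
    (p.1 = 0 ∧ q.1 = 1 ∧ p.2 = q.2) ∨ (p.1 = 1 ∧ q.1 = 0 ∧ p.2 = q.2) ∨
    (p.1 = 0 ∧ q.1 = 2 ∧ p.2 = q.2) ∨ (p.1 = 2 ∧ q.1 = 0 ∧ p.2 = q.2) ∨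
    (p.1 = 1 ∧ q.1 = 2 ∧ π p.2 = q.2) ∨ (p.1 = 2 ∧ q.1 = 1 ∧ π q.2 = p.2)

instance (π : Equiv.Perm (Fin 3)) (p q : Fin 3 × Fin 3) : Decidable (ModelAdj π p q) := by
  unfold ModelAdj; infer_instance

theorem modelAdj_symm {π : Equiv.Perm (Fin 3)} {p q} (h : ModelAdj π p q) : ModelAdj π q p := by
  rcases h with ⟨h1,h2,h3⟩|⟨h1,h2,h3⟩|⟨h1,h2,h3⟩|⟨h1,h2,h3⟩|⟨h1,h2,h3⟩|⟨h1,h2,h3⟩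
  · exact Or.inr (Or.inl ⟨h2,h1,h3.symm⟩)
  · exact Or.inl ⟨h2,h1,h3.symm⟩
  · exact Or.inr (Or.inr (Or.inr (Or.inl ⟨h2,h1,h3.symm⟩)))
  · exact Or.inr (Or.inr (Or.inl ⟨h2,h1,h3.symm⟩))
  · exact Or.inr (Or.inr (Or.inr (Or.inr (Or.inr ⟨h2,h1,h3⟩))))
  · exact Or.inr (Or.inr (Or.inr (Or.inr (Or.inl ⟨h2,h1,h3⟩))))

def Model (π : Equiv.Perm (Fin 3)) : SimpleGraph (Fin 3 × Fin 3) where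
  Adj := ModelAdj π
  symm := ⟨fun p q h => modelAdj_symm h⟩
  loopless := ⟨fun p h => by
    rcases h with ⟨h1,h2,-⟩|⟨h1,h2,-⟩|⟨h1,h2,-⟩|⟨h1,h2,-⟩|⟨h1,h2,-⟩|⟨h1,h2,-⟩ <;>
      rw [h1] at h2 <;> exact absurd h2 (by decide)⟩

instance (π : Equiv.Perm (Fin 3)) : DecidableRel (Model π).Adj := fun p q =>
  inferInstanceAs (Decidable (ModelAdj π p q))

theorem model_adj (π : Equiv.Perm (Fin 3)) (p q) : (Model π).Adj p q ↔ ModelAdj π p q := Iff.rfl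

def conjIso (π ρ : Equiv.Perm (Fin 3)) : Model π ≃g Model (ρ * π * ρ⁻¹) where
  toEquiv := Equiv.prodCongr (Equiv.refl _) ρ
  map_rel_iff' := by
    intro p q
    show ModelAdj _ _ _ ↔ ModelAdj _ _ _
    unfold ModelAdj
    simp only [Equiv.prodCongr_apply, Equiv.coe_refl, Prod.map_fst, id_eq, Prod.map_snd,
      Equiv.Perm.mul_apply, Equiv.Perm.inv_def, Equiv.symm_apply_apply, ρ.injective.eq_iff]


instance : DecidableRel (⊤ : SimpleGraph (Fin 3)).Adj := fun a b =>
  inferInstanceAs (Decidable (a ≠ b))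

instance : DecidableRel tripleTriangle.Adj :=
  inferInstanceAs (DecidableRel ((⊤ : SimpleGraph (Fin 3)) ⊕g ((⊤ : SimpleGraph (Fin 3)) ⊕g (⊤ : SimpleGraph (Fin 3)))).Adj)

instance : DecidableRel triangleUnionHexagon.Adj :=
  inferInstanceAs (DecidableRel ((⊤ : SimpleGraph (Fin 3)) ⊕g SimpleGraph.cycleGraph 6).Adj)

def idEquiv : (Fin 3 × Fin 3) ≃ (Fin 3 ⊕ (Fin 3 ⊕ Fin 3)) :=
  ⟨fun p => ![fun i => Sum.inl i, fun i => Sum.inr (Sum.inl i), fun i => Sum.inr (Sum.inr i)] p.2 p.1,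
    fun x => match x with
      | Sum.inl i => (i, 0)
      | Sum.inr (Sum.inl i) => (i, 1)
      | Sum.inr (Sum.inr i) => (i, 2),
    by decide, by decide⟩

theorem idEquiv_adj : ∀ a b, tripleTriangle.Adj (idEquiv a) (idEquiv b) ↔ (Model 1).Adj a b := by
  decide

def isoId : Model 1 ≃g tripleTriangle := ⟨idEquiv, fun {a b} => idEquiv_adj a b⟩

def rotEquiv : (Fin 3 × Fin 3) ≃ Fin 9 :=
  ⟨fun p => ![![0,3,6],![1,4,7],![8,2,5]] p.1 p.2,
    fun x => ![((0:Fin 3),(0:Fin 3)),(1,0),(2,1),(0,1),(1,1),(2,2),(0,2),(1,2),(2,0)] x,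
    by decide, by decide⟩

theorem rotEquiv_adj : ∀ a b, (SimpleGraph.cycleGraph 9).Adj (rotEquiv a) (rotEquiv b) ↔
    (Model (finRotate 3)).Adj a b := by decide

def isoRot : Model (finRotate 3) ≃g SimpleGraph.cycleGraph 9 :=
  ⟨rotEquiv, fun {a b} => rotEquiv_adj a b⟩

def swapEquiv : (Fin 3 × Fin 3) ≃ (Fin 3 ⊕ Fin 6) :=
  ⟨fun p => ![![Sum.inr 0, Sum.inr 3, Sum.inl 0],
              ![Sum.inr 1, Sum.inr 4, Sum.inl 1],
              ![Sum.inr 5, Sum.inr 2, Sum.inl 2]] p.1 p.2,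
    fun x => match x with
      | Sum.inl a => (a, (2:Fin 3))
      | Sum.inr 0 => ((0:Fin 3), (0:Fin 3))
      | Sum.inr 1 => (1, 0)
      | Sum.inr 2 => (2, 1)
      | Sum.inr 3 => (0, 1)
      | Sum.inr 4 => (1, 1)
      | Sum.inr 5 => (2, 0)
    , by decide, by decide⟩

theorem swapEquiv_adj : ∀ a b, triangleUnionHexagon.Adj (swapEquiv a) (swapEquiv b) ↔
    (Model (Equiv.swap 0 1)).Adj a b := by decide

def isoSwap : Model (Equiv.swap 0 1) ≃g triangleUnionHexagon :=
  ⟨swapEquiv, fun {a b} => swapEquiv_adj a b⟩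

set_option maxHeartbeats 1000000 in
/-- Every `[3,3,3]`-partite graph is isomorphic to `K₃ ∪ K₃ ∪ K₃`, to `C₉`,
or to `K₃ ∪ C₆`. -/
theorem partite_333_iso {V : Type} (G : SimpleGraph V)
    (h : ∃ A : Fin 3 → Finset V, IsPartiteNKR G 3 3 3 A) :
    Nonempty (G ≃g tripleTriangle) ∨
    Nonempty (G ≃g SimpleGraph.cycleGraph 9) ∨
    Nonempty (G ≃g triangleUnionHexagon) := by
  classical
  obtain ⟨A, huniq, hcard, hind, hmatch⟩ := h
  -- class uniqueness
  have hcls : ∀ {v : V} {i j : Fin 3}, v ∈ A i → v ∈ A j → i = j := by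
    intro v i j hvi hvj
    obtain ⟨c, -, hc⟩ := huniq v
    rw [hc i hvi, hc j hvj]
  -- unique neighbour in each other class
  have neigh : ∀ i j : Fin 3, i ≠ j → ∀ u ∈ A i, ∃! v, v ∈ A j ∧ G.Adj u v := by
    intro i j hij u hu
    obtain ⟨hS, hdist⟩ := hmatch i j hij
    set S : Set (V × V) := {p | p.1 ∈ A i ∧ p.2 ∈ A j ∧ G.Adj p.1 p.2} with hSdef
    have hinj : Set.InjOn Prod.fst S := by
      intro p hp q hq hpq
      by_contra hne
      exact (hdist p q hp.1 hp.2.1 hp.2.2 hq.1 hq.2.1 hq.2.2 hne).1 hpq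
    have himg : (Prod.fst '' S) = ↑(A i) := by
      apply Set.eq_of_subset_of_ncard_le
      · rintro x ⟨p, hp, rfl⟩; exact hp.1
      · rw [Set.ncard_image_of_injOn hinj, hS, Set.ncard_coe_finset, hcard]
      · exact (A i).finite_toSet
    have humem : u ∈ Prod.fst '' S := by rw [himg]; exact Finset.mem_coe.mpr hu
    obtain ⟨p, hp, hp1⟩ := humem
    refine ⟨p.2, ⟨hp.2.1, hp1 ▸ hp.2.2⟩, ?_⟩
    rintro v ⟨hv, hadj⟩
    by_contra hne
    have h2 := hdist (u, v) p hu hv hadj (hp1 ▸ hp.1) hp.2.1 hp.2.2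
      (fun hh => hne (congrArg Prod.snd hh))
    exact h2.1 hp1.symm
  -- the neighbour function
  let N : Fin 3 → V → V := fun j u =>
    if h : ∃ v, v ∈ A j ∧ G.Adj u v then h.choose else u
  have hNmem : ∀ {i j : Fin 3}, i ≠ j → ∀ {u}, u ∈ A i → N j u ∈ A j ∧ G.Adj u (N j u) := by
    intro i j hij u hu
    obtain ⟨v, hv, -⟩ := neigh i j hij u hu
    have hex : ∃ v, v ∈ A j ∧ G.Adj u v := ⟨v, hv⟩
    simpa only [N, dif_pos hex] using hex.choose_spec
  have hNeq : ∀ {i j : Fin 3}, i ≠ j → ∀ {u v}, u ∈ A i → v ∈ A j → G.Adj u v →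
      N j u = v := by
    intro i j hij u v hu hv hadj
    obtain ⟨w, -, hw⟩ := neigh i j hij u hu
    have h1 := hw (N j u) (hNmem hij hu)
    have h2 := hw v ⟨hv, hadj⟩
    rw [h1, h2]
  have hNN : ∀ {i j : Fin 3}, i ≠ j → ∀ {u}, u ∈ A i → N i (N j u) = u := by
    intro i j hij u hu
    obtain ⟨hm, ha⟩ := hNmem hij hu
    exact hNeq hij.symm hm hu ha.symm
  -- adjacency characterisation
  have key : ∀ {i j : Fin 3}, i ≠ j → ∀ {u v}, u ∈ A i → v ∈ A j →
      (G.Adj u v ↔ N j u = v) := by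
    intro i j hij u v hu hv
    constructor
    · exact fun hadj => hNeq hij hu hv hadj
    · rintro rfl; exact (hNmem hij hu).2
  -- enumeration of A 0
  have e0 := (A 0).equivFinOfCardEq (hcard 0)
  let f0 : Fin 3 → V := fun a => (e0.symm a : V)
  have hf0mem : ∀ a, f0 a ∈ A 0 := fun a => (e0.symm a).2
  have hf0inj : Function.Injective f0 := fun a b hab =>
    e0.symm.injective (Subtype.ext hab)
  have hf0surj : ∀ v ∈ A 0, ∃ a, f0 a = v := by
    intro v hv
    exact ⟨e0 ⟨v, hv⟩, congrArg Subtype.val (e0.symm_apply_apply ⟨v, hv⟩)⟩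
  -- the grid map
  let g : Fin 3 → Fin 3 → V := fun i a => if i = 0 then f0 a else N i (f0 a)
  have hg0 : ∀ a, g 0 a = f0 a := fun a => if_pos rfl
  have hgmem : ∀ i a, g i a ∈ A i := by
    intro i a
    by_cases hi : i = 0
    · subst hi; rw [hg0]; exact hf0mem a
    · simp only [g, if_neg hi]
      exact (hNmem (Ne.symm hi) (hf0mem a)).1
  have hgN : ∀ {i : Fin 3}, i ≠ 0 → ∀ a, g i a = N i (f0 a) := by
    intro i hi a; simp only [g, if_neg hi]
  have hginj : ∀ {i a b}, g i a = g i b → a = b := by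
    intro i a b hab
    by_cases hi : i = 0
    · subst hi; rw [hg0, hg0] at hab; exact hf0inj hab
    · rw [hgN hi, hgN hi] at hab
      have := congrArg (N 0) hab
      rw [hNN (Ne.symm hi) (hf0mem a), hNN (Ne.symm hi) (hf0mem b)] at this
      exact hf0inj this
  -- global bijection
  let E : Fin 3 × Fin 3 → V := fun p => g p.1 p.2
  have hEinj : Function.Injective E := by
    rintro ⟨i, a⟩ ⟨j, b⟩ hab
    simp only [E] at hab
    have hij : i = j := hcls (hab ▸ hgmem i a) (hgmem j b)
    subst hij
    exact Prod.ext rfl (hginj hab)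
  have hEsurj : Function.Surjective E := by
    intro v
    obtain ⟨i, hvi, -⟩ := huniq v
    by_cases hi : i = 0
    · subst hi
      obtain ⟨a, ha⟩ := hf0surj v hvi
      exact ⟨(0, a), by simpa [E, hg0] using ha⟩
    · have h0 : N 0 v ∈ A 0 := (hNmem hi hvi).1
      obtain ⟨a, ha⟩ := hf0surj _ h0
      refine ⟨(i, a), ?_⟩
      simp only [E, hgN hi, ha]
      exact hNN hi hvi
  let Eq : (Fin 3 × Fin 3) ≃ V := Equiv.ofBijective E ⟨hEinj, hEsurj⟩
  -- the permutation
  let π : Fin 3 → Fin 3 := fun a => (Eq.symm (N 2 (g 1 a))).2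
  have hπ : ∀ a, g 2 (π a) = N 2 (g 1 a) := by
    intro a
    have hx : N 2 (g 1 a) ∈ A 2 := (hNmem (show (1:Fin 3) ≠ 2 by decide) (hgmem 1 a)).1
    have hEx : E (Eq.symm (N 2 (g 1 a))) = N 2 (g 1 a) := Eq.apply_symm_apply _
    have h1 : (Eq.symm (N 2 (g 1 a))).1 = 2 := by
      have := hgmem (Eq.symm (N 2 (g 1 a))).1 (Eq.symm (N 2 (g 1 a))).2
      rw [show g (Eq.symm (N 2 (g 1 a))).1 (Eq.symm (N 2 (g 1 a))).2
            = E (Eq.symm (N 2 (g 1 a))) from rfl, hEx] at this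
      exact hcls this hx
    calc g 2 (π a) = E ((Eq.symm (N 2 (g 1 a))).1, (Eq.symm (N 2 (g 1 a))).2) := by
          simp only [E, π, h1]
      _ = N 2 (g 1 a) := by rw [Prod.mk.eta]; exact hEx
  have hπinj : Function.Injective π := by
    intro a b hab
    have := congrArg (g 2) hab
    rw [hπ a, hπ b] at this
    have := congrArg (N 1) this
    rw [hNN (show (1:Fin 3) ≠ 2 by decide) (hgmem 1 a),
        hNN (show (1:Fin 3) ≠ 2 by decide) (hgmem 1 b)] at this
    exact hginj this
  let πe : Equiv.Perm (Fin 3) :=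
    Equiv.ofBijective π (Finite.injective_iff_bijective.mp hπinj)
  have hπe : ∀ a, πe a = π a := fun a => rfl
  -- adjacency transfer
  have hAdj : ∀ p q : Fin 3 × Fin 3, G.Adj (Eq p) (Eq q) ↔ (Model πe).Adj p q := by
    rintro ⟨i, a⟩ ⟨j, b⟩
    show G.Adj (g i a) (g j b) ↔ ModelAdj πe (i, a) (j, b)
    have keyg : ∀ (i' j' : Fin 3), i' ≠ j' →
        (G.Adj (g i' a) (g j' b) ↔ N j' (g i' a) = g j' b) :=
      fun i' j' hij => key hij (hgmem i' a) (hgmem j' b)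
    have h01 : N 1 (g 0 a) = g 1 a := by rw [hg0, hgN (by decide : (1:Fin 3) ≠ 0)]
    have h02 : N 2 (g 0 a) = g 2 a := by rw [hg0, hgN (by decide : (2:Fin 3) ≠ 0)]
    have h10 : N 0 (g 1 a) = g 0 a := by
      rw [hgN (by decide : (1:Fin 3) ≠ 0), hg0, hNN (by decide : (0:Fin 3) ≠ 1) (hf0mem a)]
    have h20 : N 0 (g 2 a) = g 0 a := by
      rw [hgN (by decide : (2:Fin 3) ≠ 0), hg0, hNN (by decide : (0:Fin 3) ≠ 2) (hf0mem a)]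
    have h12 : N 2 (g 1 a) = g 2 (π a) := (hπ a).symm
    have h21 : ∀ a' b' : Fin 3, (N 1 (g 2 a') = g 1 b' ↔ π b' = a') := by
      intro a' b'
      constructor
      · intro hh
        have := congrArg (N 2) hh
        rw [hNN (by decide : (2:Fin 3) ≠ 1) (hgmem 2 a'), ← hπ b'] at this
        exact hginj this.symm
      · rintro rfl
        have := congrArg (N 1) (hπ b')
        rw [hNN (by decide : (1:Fin 3) ≠ 2) (hgmem 1 b')] at this
        exact this
    have fin3 : ∀ x : Fin 3, x = 0 ∨ x = 1 ∨ x = 2 := by decide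
    have diag : ∀ (i : Fin 3) (P : Prop),
        (i = 0 ∧ i = 1 ∧ P) ∨ (i = 1 ∧ i = 0 ∧ P) ∨ (i = 0 ∧ i = 2 ∧ P) ∨
        (i = 2 ∧ i = 0 ∧ P) ∨ (i = 1 ∧ i = 2 ∧ P) ∨ (i = 2 ∧ i = 1 ∧ P) → False := by
      intro i P hh
      rcases hh with ⟨h1,h2,-⟩|⟨h1,h2,-⟩|⟨h1,h2,-⟩|⟨h1,h2,-⟩|⟨h1,h2,-⟩|⟨h1,h2,-⟩ <;>
        rw [h1] at h2 <;> exact absurd h2 (by decide)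
    rcases fin3 i with rfl | rfl | rfl <;> rcases fin3 j with rfl | rfl | rfl <;>
      simp only [ModelAdj, hπe]
    · -- (0,0)
      constructor
      · exact fun hadj => absurd hadj (hind 0 _ (hgmem 0 a) _ (hgmem 0 b))
      · rintro (⟨h1,h2,h3⟩|⟨h1,h2,h3⟩|⟨h1,h2,h3⟩|⟨h1,h2,h3⟩|⟨h1,h2,h3⟩|⟨h1,h2,h3⟩) <;>
          first | exact h1.elim | exact h2.elim | exact absurd h1 (by decide) | exact absurd h2 (by decide)
    · -- (0,1)
      rw [keyg 0 1 (by decide), h01]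
      constructor
      · exact fun hh => Or.inl ⟨by trivial, by trivial, hginj hh⟩
      · rintro (⟨h1,h2,h3⟩|⟨h1,h2,h3⟩|⟨h1,h2,h3⟩|⟨h1,h2,h3⟩|⟨h1,h2,h3⟩|⟨h1,h2,h3⟩) <;>
          first | exact h1.elim | exact h2.elim | exact absurd h1 (by decide) | exact absurd h2 (by decide) | exact h3 ▸ rfl
    · -- (0,2)
      rw [keyg 0 2 (by decide), h02]
      constructor
      · exact fun hh => Or.inr (Or.inr (Or.inl ⟨by trivial, by trivial, hginj hh⟩))
      · rintro (⟨h1,h2,h3⟩|⟨h1,h2,h3⟩|⟨h1,h2,h3⟩|⟨h1,h2,h3⟩|⟨h1,h2,h3⟩|⟨h1,h2,h3⟩) <;>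
          first | exact h1.elim | exact h2.elim | exact absurd h1 (by decide) | exact absurd h2 (by decide) | exact h3 ▸ rfl
    · -- (1,0)
      rw [keyg 1 0 (by decide), h10]
      constructor
      · exact fun hh => Or.inr (Or.inl ⟨by trivial, by trivial, hginj hh⟩)
      · rintro (⟨h1,h2,h3⟩|⟨h1,h2,h3⟩|⟨h1,h2,h3⟩|⟨h1,h2,h3⟩|⟨h1,h2,h3⟩|⟨h1,h2,h3⟩) <;>
          first | exact h1.elim | exact h2.elim | exact absurd h1 (by decide) | exact absurd h2 (by decide) | exact h3 ▸ rfl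
    · -- (1,1)
      constructor
      · exact fun hadj => absurd hadj (hind 1 _ (hgmem 1 a) _ (hgmem 1 b))
      · rintro (⟨h1,h2,h3⟩|⟨h1,h2,h3⟩|⟨h1,h2,h3⟩|⟨h1,h2,h3⟩|⟨h1,h2,h3⟩|⟨h1,h2,h3⟩) <;>
          first | exact h1.elim | exact h2.elim | exact absurd h1 (by decide) | exact absurd h2 (by decide)
    · -- (1,2)
      rw [keyg 1 2 (by decide), h12]
      constructor
      · exact fun hh => Or.inr (Or.inr (Or.inr (Or.inr (Or.inl ⟨by trivial, by trivial, hginj hh⟩))))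
      · rintro (⟨h1,h2,h3⟩|⟨h1,h2,h3⟩|⟨h1,h2,h3⟩|⟨h1,h2,h3⟩|⟨h1,h2,h3⟩|⟨h1,h2,h3⟩) <;>
          first | exact h1.elim | exact h2.elim | exact absurd h1 (by decide) | exact absurd h2 (by decide) | exact h3 ▸ rfl
    · -- (2,0)
      rw [keyg 2 0 (by decide), h20]
      constructor
      · exact fun hh => Or.inr (Or.inr (Or.inr (Or.inl ⟨by trivial, by trivial, hginj hh⟩)))
      · rintro (⟨h1,h2,h3⟩|⟨h1,h2,h3⟩|⟨h1,h2,h3⟩|⟨h1,h2,h3⟩|⟨h1,h2,h3⟩|⟨h1,h2,h3⟩) <;>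
          first | exact h1.elim | exact h2.elim | exact absurd h1 (by decide) | exact absurd h2 (by decide) | exact h3 ▸ rfl
    · -- (2,1)
      rw [keyg 2 1 (by decide), h21 a b]
      constructor
      · exact fun hh => Or.inr (Or.inr (Or.inr (Or.inr (Or.inr ⟨by trivial, by trivial, hh⟩))))
      · rintro (⟨h1,h2,h3⟩|⟨h1,h2,h3⟩|⟨h1,h2,h3⟩|⟨h1,h2,h3⟩|⟨h1,h2,h3⟩|⟨h1,h2,h3⟩) <;>
          first | exact h1.elim | exact h2.elim | exact absurd h1 (by decide) | exact absurd h2 (by decide) | exact h3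
    · -- (2,2)
      constructor
      · exact fun hadj => absurd hadj (hind 2 _ (hgmem 2 a) _ (hgmem 2 b))
      · rintro (⟨h1,h2,h3⟩|⟨h1,h2,h3⟩|⟨h1,h2,h3⟩|⟨h1,h2,h3⟩|⟨h1,h2,h3⟩|⟨h1,h2,h3⟩) <;>
          first | exact h1.elim | exact h2.elim | exact absurd h1 (by decide) | exact absurd h2 (by decide)
  -- assemble the isomorphism with the model graph
  have Giso : G ≃g Model πe :=
    (show Model πe ≃g G from ⟨Eq, fun {p q} => hAdj p q⟩).symm
  -- classify the permutation up to conjugacy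
  have hclassify : ∀ σ : Equiv.Perm (Fin 3), ∃ ρ : Equiv.Perm (Fin 3),
      σ = ρ * 1 * ρ⁻¹ ∨ σ = ρ * Equiv.swap 0 1 * ρ⁻¹ ∨ σ = ρ * (finRotate 3) * ρ⁻¹ := by
    decide
  obtain ⟨ρ, hc | hc | hc⟩ := hclassify πe
  · exact Or.inl ⟨Giso.trans (((hc ▸ conjIso 1 ρ : Model 1 ≃g Model πe).symm).trans isoId)⟩
  · exact Or.inr (Or.inr ⟨Giso.trans
      (((hc ▸ conjIso (Equiv.swap 0 1) ρ : Model (Equiv.swap 0 1) ≃g Model πe).symm).trans isoSwap)⟩)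
  · exact Or.inr (Or.inl ⟨Giso.trans
      (((hc ▸ conjIso (finRotate 3) ρ : Model (finRotate 3) ≃g Model πe).symm).trans isoRot)⟩)
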